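/- Let d be a positive integer, let A be a real number, and let l⁰, l^∞, w⁰, w^∞ be positive integers. Define the real polynomial f(b) = (w⁰)^{2(d+1)}·b^{2d+3}·(A·l^∞ + l⁰(d+1)w^∞ − b(d+1)l⁰w⁰) − (w⁰)^{d+2}(w^∞)^{d}·b^{d+3}·(d+1)·(A(d+1)l^∞ − l⁰((d+1)w⁰ + (d+2)w^∞)) + (w⁰)^{d+1}(w^∞)^{d+1}·b^{d+2}·(2Ad(d+2)l^∞ − (d+1)(2d+3)l⁰(w⁰ + w^∞)) − (w⁰)^{d}(w^∞)^{d+2}·b^{d+1}·(d+1)·(A(d+1)l^∞ − l⁰((d+2)w⁰ + (d+1)w^∞)) + (w^∞)^{2(d+1)}·(b·(A·l^∞ + l⁰(d+1)w⁰) − (d+1)l⁰w^∞). Then (w⁰·b − w^∞)³ divides f(b) in the polynomial ring ℝ[b]. -/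

import Mathlib

open Polynomial

/-- The polynomial `f(b)` of Equation (functionf), as an element of `ℝ[b]`. -/
noncomputable def F (d : ℕ) (A : ℝ) (l0 linf w0 winf : ℕ) : Polynomial ℝ :=
  C ((w0:ℝ)^(2*(d+1))) * X^(2*d+3) *
      (C (A*(linf:ℝ) + (l0:ℝ)*((d:ℝ)+1)*(winf:ℝ)) - C (((d:ℝ)+1)*(l0:ℝ)*(w0:ℝ)) * X)
    - C ((w0:ℝ)^(d+2) * (winf:ℝ)^d * ((d:ℝ)+1) *
        (A*((d:ℝ)+1)*(linf:ℝ) - (l0:ℝ)*(((d:ℝ)+1)*(w0:ℝ) + ((d:ℝ)+2)*(winf:ℝ)))) * X^(d+3)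
    + C ((w0:ℝ)^(d+1) * (winf:ℝ)^(d+1) *
        (2*A*(d:ℝ)*((d:ℝ)+2)*(linf:ℝ) - ((d:ℝ)+1)*(2*(d:ℝ)+3)*(l0:ℝ)*((w0:ℝ)+(winf:ℝ)))) * X^(d+2)
    - C ((w0:ℝ)^d * (winf:ℝ)^(d+2) * ((d:ℝ)+1) *
        (A*((d:ℝ)+1)*(linf:ℝ) - (l0:ℝ)*(((d:ℝ)+2)*(w0:ℝ) + ((d:ℝ)+1)*(winf:ℝ)))) * X^(d+1)
    + C ((winf:ℝ)^(2*(d+1))) *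
      (C (A*(linf:ℝ) + (l0:ℝ)*((d:ℝ)+1)*(w0:ℝ)) * X - C (((d:ℝ)+1)*(l0:ℝ)*(winf:ℝ)))

set_option maxHeartbeats 2000000 in
/-- `(w⁰·b - w^∞)³` divides `f(b)` in `ℝ[b]`. -/
theorem stmt_10 (d : ℕ) (hd : 0 < d) (A : ℝ) (l0 linf w0 winf : ℕ)
    (hl0 : 0 < l0) (hlinf : 0 < linf) (hw0 : 0 < w0) (hwinf : 0 < winf) :
    (C (w0:ℝ) * X - C (winf:ℝ))^3 ∣ F d A l0 linf w0 winf := by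
  have hw0' : (w0:ℝ) ≠ 0 := by positivity
  set r : ℝ := (winf:ℝ)/(w0:ℝ) with hr
  have hF : F d A l0 linf w0 winf ≠ 0 := by
    intro h
    have h0 := congrArg (Polynomial.eval 0) h
    simp [F, zero_pow] at h0
    rcases h0 with h'|⟨h'|h'⟩|h'
    · omega
    · have : (0:ℝ) ≤ (d:ℝ) := Nat.cast_nonneg d
      linarith
    · omega
    · omega
  have key : (X - C r)^3 ∣ F d A l0 linf w0 winf := by
    have h2 : 2 < (F d A l0 linf w0 winf).rootMultiplicity r := by
      rw [Polynomial.lt_rootMultiplicity_iff_isRoot_iterate_derivative_of_mem_nonZeroDivisors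
        hF (by
          refine mem_nonZeroDivisors_of_ne_zero ?_
          norm_num [Nat.factorial])]
      intro m hm
      obtain ⟨e, rfl⟩ : ∃ e, d = e + 1 := ⟨d-1, by omega⟩
      interval_cases m <;>
      · show Polynomial.IsRoot _ _
        simp only [F, Function.iterate_succ, Function.iterate_zero, Function.comp_apply, id_eq,
          derivative_add, derivative_sub, derivative_mul, derivative_C_mul, derivative_C,
          derivative_X, derivative_X_pow, IsRoot.def]
        simp
        rw [hr]
        simp only [div_pow]
        field_simp
        ring
    exact dvd_trans (pow_dvd_pow _ h2) (Polynomial.pow_rootMultiplicity_dvd _ _)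
  have hfac : (C (w0:ℝ) * X - C (winf:ℝ))^3 = C (w0:ℝ)^3 * (X - C r)^3 := by
    rw [← mul_pow, mul_sub, ← C_mul, hr, mul_div_cancel₀ _ hw0']
  rw [hfac]
  exact ((isUnit_C.2 hw0'.isUnit).pow 3).mul_left_dvd.mpr key
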